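/- arXiv:1411.1805 — 5 statements merged into one kernel-verified Lean document; each statement's English description precedes it below -/
import Mathlib

section
/- Let X be a random variable on [0,1]^p with positive density, and let f : [0,1]^p → ℝ be square-integrable. The minimizers (μ*, f*_1, …, f*_p) of E[(f(X) − μ − Σ_k f_k(X_k))²] over μ ∈ ℝ and measurable functions f_k with E[f_k(X_k)] = 0 satisfy μ* = E[f(X)] and, for each k, f*_k(x_k) = E[f(X) − Σ_{k'≠k} f*_{k'}(X_{k'}) | X_k = x_k] − E[f(X)], and this solution is unique (up to almost-everywhere equality). -/
open MeasureTheory Set Finset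
open scoped ENNReal

/-- The squared-error objective of the additive approximation. -/
noncomputable def addObj {p : ℕ} (μ : Measure (Fin p → ℝ)) (f : (Fin p → ℝ) → ℝ)
    (c : ℝ) (g : Fin p → ℝ → ℝ) : ℝ :=
  ∫ x, (f x - c - ∑ k, g k (x k)) ^ 2 ∂μ

/-- Feasible component functions: measurable, square-integrable, mean zero. -/
def AddFeasible {p : ℕ} (μ : Measure (Fin p → ℝ)) (g : Fin p → ℝ → ℝ) : Prop :=
  ∀ k, Measurable (g k) ∧ MemLp (fun x => g k (x k)) 2 μ ∧ (∫ x, g k (x k) ∂μ) = 0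

/-! ### Auxiliary lemmas -/

section Helpers
variable {α : Type*} [MeasurableSpace α] {μ : Measure α}

lemma BK.integrable_mul_L2 {f g : α → ℝ} (hf : MemLp f 2 μ) (hg : MemLp g 2 μ) :
    Integrable (fun x => f x * g x) μ := by
  have h1 := (hf.add hg).integrable_sq
  have h2 := hf.integrable_sq
  have h3 := hg.integrable_sq
  have he : (fun x => f x * g x) = fun x => ((f x + g x) ^ 2 - f x ^ 2 - g x ^ 2) / 2 := by
    funext x; ring
  rw [he]
  exact ((h1.sub h2).sub h3).div_const 2

lemma BK.quad_B_eq_zero {A B C : ℝ} (hC : 0 ≤ C)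
    (h : ∀ t : ℝ, A ≤ A - 2 * t * B + t ^ 2 * C) : B = 0 := by
  have h1 := h (B / (C + 1))
  have hC1 : (0:ℝ) < C + 1 := by linarith
  have h2 : 0 ≤ - 2 * (B / (C+1)) * B + (B / (C+1))^2 * C := by linarith
  have h3 : 0 ≤ (-2 * (B / (C+1)) * B + (B / (C+1))^2 * C) * (C+1)^2 :=
    mul_nonneg h2 (sq_nonneg _)
  have h4 : (-2 * (B / (C+1)) * B + (B / (C+1))^2 * C) * (C+1)^2
      = -2 * B^2 * (C+1) + B^2 * C := by
    field_simp
  have h5 : B ^ 2 = 0 := by nlinarith [sq_nonneg B]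
  exact sq_eq_zero_iff.mp h5

lemma BK.opt_const [IsProbabilityMeasure μ] {Y : α → ℝ} (hY : MemLp Y 2 μ) {c : ℝ}
    (h : ∀ c', ∫ x, (Y x - c) ^ 2 ∂μ ≤ ∫ x, (Y x - c') ^ 2 ∂μ) : c = ∫ x, Y x ∂μ := by
  set m := ∫ x, Y x ∂μ with hm
  have hYi : Integrable Y μ := hY.integrable one_le_two
  have key : ∀ c', ∫ x, (Y x - c') ^ 2 ∂μ = ∫ x, (Y x - m) ^ 2 ∂μ + (c' - m) ^ 2 := by
    intro c'
    have h1 : Integrable (fun x => (Y x - m) ^ 2) μ := (hY.sub (memLp_const m)).integrable_sq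
    have h2 : Integrable (fun x => 2 * (m - c') * (Y x - m)) μ :=
      (hYi.sub (integrable_const m)).const_mul _
    have h23 : Integrable (fun x => 2 * (m - c') * (Y x - m) + (m - c') ^ 2) μ := by
      exact h2.add (integrable_const _)
    have hint0 : ∫ x, (Y x - m) ∂μ = 0 := by
      rw [integral_sub hYi (integrable_const _), integral_const]
      simp [← hm]
    calc ∫ x, (Y x - c') ^ 2 ∂μ
        = ∫ x, ((Y x - m) ^ 2 + (2 * (m - c') * (Y x - m) + (m - c') ^ 2)) ∂μ := by
          congr 1; funext x; ring
      _ = ∫ x, (Y x - m) ^ 2 ∂μ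
            + (∫ x, 2 * (m - c') * (Y x - m) ∂μ + ∫ _x, ((m - c') ^ 2 : ℝ) ∂μ) := by
          rw [integral_add h1 h23, integral_add h2 (integrable_const _)]
      _ = ∫ x, (Y x - m) ^ 2 ∂μ + (c' - m) ^ 2 := by
          rw [integral_const_mul, hint0, integral_const]
          simp only [measure_univ, probReal_univ, ENNReal.toReal_one, one_smul, one_mul, smul_eq_mul, mul_zero, zero_add]
          ring
  have h0 := h m
  rw [key c, key m] at h0
  have hle : (c - m) ^ 2 ≤ 0 := by linarith [sq_nonneg (m - m)]
  have hge := sq_nonneg (c - m)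
  have heq : (c - m) ^ 2 = 0 := le_antisymm hle hge
  nlinarith [heq]

end Helpers

section Main
variable {p : ℕ} {μ : Measure (Fin p → ℝ)} [IsProbabilityMeasure μ]
  {f : (Fin p → ℝ) → ℝ}

omit [IsProbabilityMeasure μ] in
lemma BK.sum_memLp {g : Fin p → ℝ → ℝ} (hg : AddFeasible μ g) :
    MemLp (fun x => ∑ j, g j (x j)) 2 μ :=
  memLp_finset_sum Finset.univ (fun j _ => (hg j).2.1)

lemma BK.sum_int_zero {g : Fin p → ℝ → ℝ} (hg : AddFeasible μ g) :
    ∫ x, ∑ j, g j (x j) ∂μ = 0 := by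
  rw [integral_finset_sum _ (fun j _ => ((hg j).2.1.integrable one_le_two))]
  exact Finset.sum_eq_zero fun j _ => (hg j).2.2

lemma BK.foc (hf : MemLp f 2 μ) {cstar : ℝ} {gstar : Fin p → ℝ → ℝ}
    (hfeas : AddFeasible μ gstar)
    (hmin : ∀ (c : ℝ) (g : Fin p → ℝ → ℝ), AddFeasible μ g →
      addObj μ f cstar gstar ≤ addObj μ f c g)
    (k : Fin p) (h : ℝ → ℝ) (hhm : Measurable h)
    (hh2 : MemLp (fun x => h (x k)) 2 μ) (hh0 : ∫ x, h (x k) ∂μ = 0) :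
    ∫ x, (f x - cstar - ∑ j, gstar j (x j)) * h (x k) ∂μ = 0 := by
  classical
  set R : (Fin p → ℝ) → ℝ := fun x => f x - cstar - ∑ j, gstar j (x j) with hR
  set H : (Fin p → ℝ) → ℝ := fun x => h (x k) with hH
  have hR2 : MemLp R 2 μ := (hf.sub (memLp_const cstar)).sub (BK.sum_memLp hfeas)
  have hRH : Integrable (fun x => R x * H x) μ := BK.integrable_mul_L2 hR2 hh2
  have hH2i : Integrable (fun x => H x ^ 2) μ := hh2.integrable_sq
  have hR2i : Integrable (fun x => R x ^ 2) μ := hR2.integrable_sq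
  have hsum : ∀ (t : ℝ) (x : Fin p → ℝ),
      ∑ j, Function.update gstar k (fun s => gstar k s + t * h s) j (x j)
        = (∑ j, gstar j (x j)) + t * h (x k) := by
    intro t x
    have e1 : ∀ j, Function.update gstar k (fun s => gstar k s + t * h s) j (x j)
        = Function.update (fun j' => gstar j' (x j')) k (gstar k (x k) + t * h (x k)) j := by
      intro j
      rcases eq_or_ne j k with rfl | hj
      · simp
      · simp [Function.update_of_ne hj]
    rw [Finset.sum_congr rfl fun j _ => e1 j, Finset.sum_update_of_mem (Finset.mem_univ k),
      Finset.sdiff_singleton_eq_erase, ← Finset.add_sum_erase _ _ (Finset.mem_univ k)]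
    ring
  have hfeas' : ∀ t : ℝ,
      AddFeasible μ (Function.update gstar k (fun s => gstar k s + t * h s)) := by
    intro t j
    rcases eq_or_ne j k with rfl | hj
    · refine ⟨?_, ?_, ?_⟩
      · simp only [Function.update_self]; exact (hfeas j).1.add (hhm.const_mul t)
      · simp only [Function.update_self]; exact (hfeas j).2.1.add (hh2.const_mul t)
      · simp only [Function.update_self]
        rw [integral_add ((hfeas j).2.1.integrable one_le_two)
          ((hh2.const_mul t).integrable one_le_two), (hfeas j).2.2, integral_const_mul, hh0]
        ring
    · simpa [Function.update_of_ne hj] using hfeas j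
  have hobj : ∀ t : ℝ,
      addObj μ f cstar (Function.update gstar k (fun s => gstar k s + t * h s))
        = ∫ x, R x ^ 2 ∂μ - 2 * t * ∫ x, R x * H x ∂μ + t ^ 2 * ∫ x, H x ^ 2 ∂μ := by
    intro t
    have e : (fun x => (f x - cstar
          - ∑ j, Function.update gstar k (fun s => gstar k s + t * h s) j (x j)) ^ 2)
        = fun x => R x ^ 2 - 2 * t * (R x * H x) + t ^ 2 * H x ^ 2 := by
      funext x
      rw [hsum t x]
      simp only [hR, hH]
      ring
    have e' : addObj μ f cstar (Function.update gstar k (fun s => gstar k s + t * h s))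
        = ∫ x, (R x ^ 2 - 2 * t * (R x * H x) + t ^ 2 * H x ^ 2) ∂μ := by
      simp only [addObj]
      exact integral_congr_ae (Filter.EventuallyEq.of_eq e)
    have i1 : Integrable (fun x => R x ^ 2 - 2 * t * (R x * H x)) μ :=
      hR2i.sub (hRH.const_mul _)
    have i2 : Integrable (fun x => t ^ 2 * H x ^ 2) μ := hH2i.const_mul _
    have i3 : Integrable (fun x => 2 * t * (R x * H x)) μ := hRH.const_mul _
    rw [e', integral_add i1 i2, integral_sub hR2i i3, integral_const_mul, integral_const_mul]
  have hA : addObj μ f cstar gstar = ∫ x, R x ^ 2 ∂μ := rfl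
  have hquad : ∀ t : ℝ, ∫ x, R x ^ 2 ∂μ
      ≤ ∫ x, R x ^ 2 ∂μ - 2 * t * ∫ x, R x * H x ∂μ + t ^ 2 * ∫ x, H x ^ 2 ∂μ := by
    intro t
    rw [← hobj t, ← hA]
    exact hmin cstar _ (hfeas' t)
  have := BK.quad_B_eq_zero (integral_nonneg fun x => sq_nonneg (H x)) hquad
  simpa [hR, hH] using this

end Main

/-- The σ-algebra generated by the `k`-th coordinate. -/
def BK.mK {p : ℕ} (k : Fin p) : MeasurableSpace (Fin p → ℝ) :=
  MeasurableSpace.comap (fun y : Fin p → ℝ => y k) inferInstance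

section CE
variable {p : ℕ} {μ : Measure (Fin p → ℝ)} [IsProbabilityMeasure μ]
  {f : (Fin p → ℝ) → ℝ}

lemma BK.condexp_char (hf : MemLp f 2 μ) {cstar : ℝ} {gstar : Fin p → ℝ → ℝ}
    (hfeas : AddFeasible μ gstar)
    (hfoc : ∀ (k : Fin p) (h : ℝ → ℝ), Measurable h →
      MemLp (fun x => h (x k)) 2 μ → (∫ x, h (x k) ∂μ) = 0 →
      ∫ x, (f x - cstar - ∑ j, gstar j (x j)) * h (x k) ∂μ = 0)
    (hc : cstar = ∫ x, f x ∂μ) (k : Fin p) :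
    (fun x => gstar k (x k))
      =ᵐ[μ] fun x =>
        (μ[(fun y => f y - ∑ k' ∈ Finset.univ.erase k, gstar k' (y k')) |
            MeasurableSpace.comap (fun y : Fin p → ℝ => y k) inferInstance]) x
          - ∫ y, f y ∂μ := by
  classical
  have hm : BK.mK k ≤ MeasurableSpace.pi := measurable_iff_comap_le.mp (measurable_pi_apply k)
  set R : (Fin p → ℝ) → ℝ := fun x => f x - cstar - ∑ j, gstar j (x j) with hRdef
  have hfi : Integrable f μ := hf.integrable one_le_two
  have hgi : ∀ j, Integrable (fun x => gstar j (x j)) μ :=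
    fun j => ((hfeas j).2.1).integrable one_le_two
  have hsumi : Integrable (fun x => ∑ j, gstar j (x j)) μ :=
    integrable_finset_sum _ fun j _ => hgi j
  have hRi : Integrable R μ := (hfi.sub (integrable_const _)).sub hsumi
  have hRint : ∫ x, R x ∂μ = 0 := by
    have i1 : Integrable (fun x => f x - cstar) μ := hfi.sub (integrable_const _)
    rw [hRdef]
    rw [integral_sub i1 hsumi, integral_sub hfi (integrable_const _), integral_const]
    have : ∫ x, ∑ j, gstar j (x j) ∂μ = 0 := by
      rw [integral_finset_sum _ fun j _ => hgi j]
      exact Finset.sum_eq_zero fun j _ => (hfeas j).2.2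
    rw [this]
    simp [hc]
  have hsetint : ∀ A : Set ℝ, MeasurableSet A →
      ∫ x in (fun y : Fin p → ℝ => y k) ⁻¹' A, R x ∂μ = 0 := by
    intro A hA
    set S : Set (Fin p → ℝ) := (fun y : Fin p → ℝ => y k) ⁻¹' A with hSdef
    have hS : MeasurableSet[MeasurableSpace.pi] S := measurable_pi_apply k hA
    set c : ℝ := (μ S).toReal with hcdef
    set h : ℝ → ℝ := fun t => A.indicator (fun _ => (1:ℝ)) t - c with hhdef
    have hind : (fun x : Fin p → ℝ => A.indicator (fun _ => (1:ℝ)) (x k))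
        = S.indicator (fun _ => (1:ℝ)) := by
      funext x
      by_cases hx : x k ∈ A <;> simp [Set.indicator_apply, hx, hSdef]
    have hhm : Measurable h :=
      (measurable_const.indicator hA).sub measurable_const
    have hh2 : MemLp (fun x : Fin p → ℝ => h (x k)) 2 μ := by
      have e : (fun x : Fin p → ℝ => h (x k))
          = fun x => S.indicator (fun _ => (1:ℝ)) x - c := by
        funext x
        simp only [hhdef]
        rw [← hind]
      rw [e]
      exact ((MemLp.indicator hS (memLp_const (1:ℝ))).sub (memLp_const c))
    have hindint : ∫ x, S.indicator (fun _ => (1:ℝ)) x ∂μ = c := by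
      rw [integral_indicator_const (1:ℝ) hS]
      simp [hcdef, Measure.real]
    have hh0 : ∫ x, h (x k) ∂μ = 0 := by
      have e : (fun x : Fin p → ℝ => h (x k))
          = fun x => S.indicator (fun _ => (1:ℝ)) x - c := by
        funext x
        simp only [hhdef]
        rw [← hind]
      rw [e, integral_sub ((MemLp.indicator hS (memLp_const (1:ℝ))).integrable one_le_two)
        (integrable_const _), hindint, integral_const]
      simp
    have hfoc' := hfoc k h hhm hh2 hh0
    have e2 : (fun x => (f x - cstar - ∑ j, gstar j (x j)) * h (x k))
        = fun x => R x * S.indicator (fun _ => (1:ℝ)) x - c * R x := by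
      funext x
      simp only [hhdef, hRdef]
      rw [← hind]
      ring
    rw [e2] at hfoc'
    have hRind : Integrable (fun x => R x * S.indicator (fun _ => (1:ℝ)) x) μ := by
      have e3 : (fun x => R x * S.indicator (fun _ => (1:ℝ)) x) = S.indicator R := by
        funext x
        by_cases hx : x ∈ S <;> simp [Set.indicator_apply, hx]
      rw [e3]
      exact hRi.indicator hS
    rw [integral_sub hRind (hRi.const_mul c), integral_const_mul, hRint, mul_zero, sub_zero]
      at hfoc'
    have e3 : (fun x => R x * S.indicator (fun _ => (1:ℝ)) x) = S.indicator R := by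
      funext x
      by_cases hx : x ∈ S <;> simp [Set.indicator_apply, hx]
    rw [e3, integral_indicator hS] at hfoc'
    exact hfoc'
  have hcond0 : (0 : (Fin p → ℝ) → ℝ) =ᵐ[μ] μ[R|BK.mK k] := by
    refine ae_eq_condExp_of_forall_setIntegral_eq hm hRi
      (fun s _ _ => integrableOn_zero) (fun s hs _ => ?_)
      (StronglyMeasurable.aestronglyMeasurable (show StronglyMeasurable[BK.mK k] fun _ : Fin p → ℝ => (0:ℝ) from
        stronglyMeasurable_const))
    obtain ⟨A, hA, rfl⟩ := hs
    rw [hsetint A hA]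
    simp
  set Fk : (Fin p → ℝ) → ℝ := fun y => f y - ∑ k' ∈ Finset.univ.erase k, gstar k' (y k')
    with hFkdef
  set B : (Fin p → ℝ) → ℝ := fun x => cstar + gstar k (x k) with hBdef
  have hFki : Integrable Fk μ :=
    hfi.sub (integrable_finset_sum _ fun j _ => hgi j)
  have hBi : Integrable B μ := by
    rw [hBdef]
    exact (integrable_const cstar).add (hgi k)
  have hRsplit : R = Fk - B := by
    funext x
    simp only [hRdef, hFkdef, hBdef, Pi.sub_apply]
    rw [← Finset.add_sum_erase _ _ (Finset.mem_univ k)]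
    ring
  have hmeasm : Measurable[BK.mK k] fun y : Fin p → ℝ => y k := Measurable.of_comap_le le_rfl
  have hBsm : StronglyMeasurable[BK.mK k] B := by
    have : Measurable[BK.mK k] B := ((hfeas k).1.comp hmeasm).const_add cstar
    exact this.stronglyMeasurable
  have hcondB : μ[B|BK.mK k] = B := condExp_of_stronglyMeasurable hm hBsm hBi
  have hcondsub : μ[R|BK.mK k] =ᵐ[μ] μ[Fk|BK.mK k] - B := by
    rw [← hcondB]
    rw [hRsplit]
    exact condExp_sub hFki hBi _
  have key : (fun x => gstar k (x k)) =ᵐ[μ] fun x => (μ[Fk|BK.mK k]) x - cstar := by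
    filter_upwards [hcond0, hcondsub] with x h1 h2
    simp only [Pi.zero_apply] at h1
    simp only [Pi.sub_apply, hBdef] at h2
    linarith
  rw [hc] at key
  exact key

end CE

/-! ### Measure-theoretic identifiability -/

lemma BK.prob_nu1 : IsProbabilityMeasure (volume.restrict (Icc (0:ℝ) 1)) := by
  constructor
  rw [Measure.restrict_apply_univ, Real.volume_Icc]
  norm_num

lemma BK.nu_eq_pi (p : ℕ) :
    volume.restrict (Icc (0 : Fin p → ℝ) 1)
      = Measure.pi (fun _ : Fin p => volume.restrict (Icc (0:ℝ) 1)) := by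
  refine (Measure.pi_eq fun s hs => ?_).symm
  rw [Measure.restrict_apply (MeasurableSet.univ_pi hs)]
  have hIcc : (Icc (0 : Fin p → ℝ) 1) = univ.pi (fun _ : Fin p => Icc (0:ℝ) 1) :=
    (Set.pi_univ_Icc (fun _ : Fin p => (0:ℝ)) (fun _ => (1:ℝ))).symm
  rw [hIcc, ← Set.pi_inter_distrib, volume_pi_pi]
  refine Finset.prod_congr rfl fun i _ => ?_
  rw [Measure.restrict_apply (hs i)]

lemma BK.ac_nu_mu {p : ℕ} (dens : (Fin p → ℝ) → ℝ≥0∞)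
    (hdenspos : ∀ x ∈ Icc (0 : Fin p → ℝ) 1, 0 < dens x) (hdensmeas : Measurable dens) :
    volume.restrict (Icc (0 : Fin p → ℝ) 1)
      ≪ (volume.restrict (Icc (0 : Fin p → ℝ) 1)).withDensity dens := by
  set ν := volume.restrict (Icc (0 : Fin p → ℝ) 1) with hν
  refine Measure.AbsolutelyContinuous.mk fun s hs h0 => ?_
  rw [withDensity_apply dens hs] at h0
  have hz : dens =ᵐ[ν.restrict s] 0 := (lintegral_eq_zero_iff hdensmeas).mp h0
  have hmem : ∀ᵐ x ∂ν.restrict s, x ∈ Icc (0 : Fin p → ℝ) 1 :=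
    ae_restrict_of_ae (ae_restrict_mem measurableSet_Icc)
  have hfalse : ∀ᵐ x ∂ν.restrict s, False := by
    filter_upwards [hz, hmem] with x h1 h2
    exact absurd h1 (ne_of_gt (hdenspos x h2))
  have := ae_iff.mp hfalse
  simp only [not_false_iff, setOf_true] at this
  rwa [Measure.restrict_apply_univ] at this

lemma BK.map_update (p : ℕ) (k : Fin p) (ν₁ : Measure ℝ) [IsProbabilityMeasure ν₁] :
    Measure.map (fun q : (Fin p → ℝ) × ℝ => Function.update q.1 k q.2)
      ((Measure.pi fun _ : Fin p => ν₁).prod ν₁) = Measure.pi (fun _ : Fin p => ν₁) := by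
  classical
  refine (Measure.pi_eq fun s hs => ?_).symm
  rw [Measure.map_apply measurable_update' (MeasurableSet.univ_pi hs)]
  have hpre : (fun q : (Fin p → ℝ) × ℝ => Function.update q.1 k q.2) ⁻¹' (univ.pi s)
      = (univ.pi (Function.update s k univ)) ×ˢ s k := by
    ext ⟨x, t⟩
    simp only [Set.mem_preimage, Set.mem_univ_pi, Set.mem_prod]
    constructor
    · intro H
      refine ⟨fun j => ?_, ?_⟩
      · rcases eq_or_ne j k with rfl | hj
        · simp
        · have := H j
          rwa [Function.update_of_ne hj] at this ⊢
      · have := H k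
        rwa [Function.update_self] at this
    · rintro ⟨H1, H2⟩ j
      rcases eq_or_ne j k with rfl | hj
      · rwa [Function.update_self]
      · have := H1 j
        rwa [Function.update_of_ne hj] at this ⊢
  rw [hpre, Measure.prod_prod, Measure.pi_pi]
  have e1 : ∀ j, ν₁ (Function.update s k univ j)
      = Function.update (fun j' => ν₁ (s j')) k (ν₁ univ) j := by
    intro j
    rcases eq_or_ne j k with rfl | hj
    · simp
    · simp [Function.update_of_ne hj]
  rw [Finset.prod_congr rfl fun j _ => e1 j, Finset.prod_update_of_mem (Finset.mem_univ k),
    measure_univ, one_mul, Finset.sdiff_singleton_eq_erase, mul_comm]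
  exact Finset.mul_prod_erase Finset.univ (fun x => ν₁ (s x)) (Finset.mem_univ k)

lemma BK.ident {p : ℕ} (dens : (Fin p → ℝ) → ℝ≥0∞)
    (hdenspos : ∀ x ∈ Icc (0 : Fin p → ℝ) 1, 0 < dens x) (hdensmeas : Measurable dens)
    {μ : Measure (Fin p → ℝ)}
    (hμ : μ = (volume.restrict (Icc (0 : Fin p → ℝ) 1)).withDensity dens)
    (D : Fin p → ℝ → ℝ) (hDm : ∀ j, Measurable (D j))
    (hzero : ∀ᵐ x ∂μ, ∑ j, D j (x j) = 0) (k : Fin p) :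
    ∃ c : ℝ, ∀ᵐ x ∂μ, D k (x k) = c := by
  classical
  haveI : IsProbabilityMeasure (volume.restrict (Icc (0:ℝ) 1)) := BK.prob_nu1
  set ν₁ : Measure ℝ := volume.restrict (Icc (0:ℝ) 1) with hν₁
  set P : Measure (Fin p → ℝ) := Measure.pi (fun _ : Fin p => ν₁) with hP
  have hν : volume.restrict (Icc (0 : Fin p → ℝ) 1) = P := BK.nu_eq_pi p
  have hνμ : volume.restrict (Icc (0 : Fin p → ℝ) 1) ≪ μ := by
    rw [hμ]; exact BK.ac_nu_mu dens hdenspos hdensmeas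
  have hμν : μ ≪ volume.restrict (Icc (0 : Fin p → ℝ) 1) := by
    rw [hμ]; exact withDensity_absolutelyContinuous _ _
  have hPμ : P ≪ μ := hν ▸ hνμ
  have hμP : μ ≪ P := hν ▸ hμν
  have hzP : ∀ᵐ x ∂P, ∑ j, D j (x j) = 0 := hPμ.ae_le hzero
  have hsm : Measurable fun x : Fin p → ℝ => ∑ j, D j (x j) :=
    Finset.measurable_sum _ fun j _ => (hDm j).comp (measurable_pi_apply j)
  have hset : MeasurableSet {x : Fin p → ℝ | ∑ j, D j (x j) = 0} :=
    measurableSet_eq_fun hsm measurable_const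
  set φ : (Fin p → ℝ) × ℝ → (Fin p → ℝ) := fun q => Function.update q.1 k q.2 with hφ
  have hφm : Measurable φ := measurable_update'
  have hmap : Measure.map φ (P.prod ν₁) = P := BK.map_update p k ν₁
  have E1 : ∀ᵐ q ∂(P.prod ν₁), ∑ j, D j (φ q j) = 0 := by
    have h1 : ∀ᵐ y ∂(Measure.map φ (P.prod ν₁)), ∑ j, D j (y j) = 0 := by
      rw [hmap]; exact hzP
    exact (ae_map_iff hφm.aemeasurable hset).mp h1
  have E2 : ∀ᵐ q ∂(P.prod ν₁), ∑ j, D j (q.1 j) = 0 := by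
    rw [ae_iff] at hzP ⊢
    have hpre : {q : (Fin p → ℝ) × ℝ | ¬ ∑ j, D j (q.1 j) = 0}
        = {x : Fin p → ℝ | ¬ ∑ j, D j (x j) = 0} ×ˢ (univ : Set ℝ) := by
      ext ⟨a, b⟩
      simp [Set.mem_prod]
    rw [hpre, Measure.prod_prod, hzP, zero_mul]
  have E3 : ∀ᵐ q ∂(P.prod ν₁), D k q.2 = D k (q.1 k) := by
    filter_upwards [E1, E2] with q h1 h2
    have e1 : ∀ j, D j (φ q j)
        = Function.update (fun j' => D j' (q.1 j')) k (D k q.2) j := by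
      intro j
      rcases eq_or_ne j k with rfl | hj
      · simp [hφ]
      · simp [hφ, Function.update_of_ne hj]
    rw [Finset.sum_congr rfl fun j _ => e1 j, Finset.sum_update_of_mem (Finset.mem_univ k),
      Finset.sdiff_singleton_eq_erase] at h1
    rw [← Finset.add_sum_erase Finset.univ (fun j => D j (q.1 j)) (Finset.mem_univ k)] at h2
    linarith
  have E4 : ∀ᵐ x ∂P, ∀ᵐ t ∂ν₁, D k t = D k (x k) := Measure.ae_ae_of_ae_prod E3
  haveI : IsProbabilityMeasure P := by
    rw [hP]; infer_instance
  obtain ⟨x₀, hx₀⟩ := E4.exists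
  refine ⟨D k (x₀ k), ?_⟩
  have hnull : ν₁ {t : ℝ | ¬ D k t = D k (x₀ k)} = 0 := ae_iff.mp hx₀
  have hPnull : P ((fun x : Fin p → ℝ => x k) ⁻¹' {t : ℝ | ¬ D k t = D k (x₀ k)}) = 0 :=
    Measure.pi_eval_preimage_null _ hnull
  have hPae : ∀ᵐ x ∂P, D k (x k) = D k (x₀ k) := by
    rw [ae_iff]
    exact hPnull
  exact hμP.ae_le hPae

/-- Population backfitting characterization (Lemma 1): for `X` with a positive
density on `[0,1]^p` and square-integrable `f`, any minimizer `(c⋆, g⋆)` of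
`E (f(X) - c - ∑ₖ gₖ(Xₖ))²` over mean-zero components satisfies `c⋆ = E f(X)`
and `g⋆ₖ(Xₖ) = E[f(X) - ∑_{k'≠k} g⋆_{k'}(X_{k'}) | Xₖ] - E f(X)` a.e., and the
minimizer is unique up to a.e. equality. -/
theorem backfitting_characterization (p : ℕ) (dens : (Fin p → ℝ) → ℝ≥0∞)
    (hdenspos : ∀ x ∈ Icc (0 : Fin p → ℝ) 1, 0 < dens x) (hdensmeas : Measurable dens)
    (μ : Measure (Fin p → ℝ))
    (hμ : μ = (volume.restrict (Icc (0 : Fin p → ℝ) 1)).withDensity dens)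
    (hprob : IsProbabilityMeasure μ)
    (f : (Fin p → ℝ) → ℝ) (hfmeas : Measurable f) (hf : MemLp f 2 μ)
    (cstar : ℝ) (gstar : Fin p → ℝ → ℝ)
    (hfeas : AddFeasible μ gstar)
    (hmin : ∀ (c : ℝ) (g : Fin p → ℝ → ℝ), AddFeasible μ g →
      addObj μ f cstar gstar ≤ addObj μ f c g) :
    cstar = (∫ x, f x ∂μ)
    ∧ (∀ k : Fin p,
        (fun x => gstar k (x k))
          =ᵐ[μ] fun x =>
            (μ[(fun y => f y - ∑ k' ∈ Finset.univ.erase k, gstar k' (y k')) |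
                MeasurableSpace.comap (fun y : Fin p → ℝ => y k) inferInstance]) x
              - ∫ y, f y ∂μ)
    ∧ (∀ (c' : ℝ) (g' : Fin p → ℝ → ℝ), AddFeasible μ g' →
        (∀ (c : ℝ) (g : Fin p → ℝ → ℝ), AddFeasible μ g →
          addObj μ f c' g' ≤ addObj μ f c g) →
        c' = cstar ∧ ∀ k, (fun x => g' k (x k)) =ᵐ[μ] fun x => gstar k (x k)) := by
  classical
  haveI := hprob
  -- any minimizer has the mean of `f` as its constant
  have hopt : ∀ (c : ℝ) (g : Fin p → ℝ → ℝ), AddFeasible μ g →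
      (∀ (c₂ : ℝ) (g₂ : Fin p → ℝ → ℝ), AddFeasible μ g₂ →
        addObj μ f c g ≤ addObj μ f c₂ g₂) → c = ∫ x, f x ∂μ := by
    intro c g hg hmin'
    set Y : (Fin p → ℝ) → ℝ := fun x => f x - ∑ j, g j (x j) with hY
    have hY2 : MemLp Y 2 μ := hf.sub (BK.sum_memLp hg)
    have hobj : ∀ c₂ : ℝ, addObj μ f c₂ g = ∫ x, (Y x - c₂) ^ 2 ∂μ := by
      intro c₂
      simp only [addObj]
      refine integral_congr_ae (Filter.EventuallyEq.of_eq ?_)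
      funext x
      simp only [hY]
      ring
    have hmin2 : ∀ c₂ : ℝ, ∫ x, (Y x - c) ^ 2 ∂μ ≤ ∫ x, (Y x - c₂) ^ 2 ∂μ := by
      intro c₂
      rw [← hobj c, ← hobj c₂]
      exact hmin' c₂ g hg
    have hcY : c = ∫ x, Y x ∂μ := BK.opt_const hY2 hmin2
    have hYint : ∫ x, Y x ∂μ = ∫ x, f x ∂μ := by
      rw [hY]
      rw [integral_sub (hf.integrable one_le_two)
        (integrable_finset_sum _ fun j _ => ((hg j).2.1.integrable one_le_two)),
        BK.sum_int_zero hg, sub_zero]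
    rw [hcY, hYint]
  have h1 : cstar = ∫ x, f x ∂μ := hopt cstar gstar hfeas hmin
  refine ⟨h1, fun k => BK.condexp_char hf hfeas
    (fun k h hhm hh2 hh0 => BK.foc hf hfeas hmin k h hhm hh2 hh0) h1 k, ?_⟩
  intro c' g' hfeas' hmin'
  have hc' : c' = ∫ x, f x ∂μ := hopt c' g' hfeas' hmin'
  have hcc : c' = cstar := by rw [hc', h1]
  refine ⟨hcc, ?_⟩
  subst hcc
  -- residuals agree almost everywhere
  set G : (Fin p → ℝ) → ℝ := fun x => ∑ j, gstar j (x j) with hG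
  set G' : (Fin p → ℝ) → ℝ := fun x => ∑ j, g' j (x j) with hG'
  have hG2 : MemLp G 2 μ := BK.sum_memLp hfeas
  have hG'2 : MemLp G' 2 μ := BK.sum_memLp hfeas'
  have hr2 : MemLp (fun x => f x - c' - G x) 2 μ := (hf.sub (memLp_const _)).sub hG2
  have hr'2 : MemLp (fun x => f x - c' - G' x) 2 μ := (hf.sub (memLp_const _)).sub hG'2
  have ha2 : Integrable (fun x => (f x - c' - G x) ^ 2) μ := hr2.integrable_sq
  have hb2 : Integrable (fun x => (f x - c' - G' x) ^ 2) μ := hr'2.integrable_sq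
  have hd2 : Integrable (fun x => (G' x - G x) ^ 2) μ := (hG'2.sub hG2).integrable_sq
  have hVeq : addObj μ f c' gstar = addObj μ f c' g' :=
    le_antisymm (hmin c' g' hfeas') (hmin' c' gstar hfeas)
  -- midpoint perturbation
  set gmid : Fin p → ℝ → ℝ := fun j t => (1/2 : ℝ) * (gstar j t + g' j t) with hgmid
  have hfeasmid : AddFeasible μ gmid := by
    intro j
    refine ⟨((hfeas j).1.add (hfeas' j).1).const_mul _, ?_, ?_⟩
    · exact ((hfeas j).2.1.add (hfeas' j).2.1).const_mul _
    · simp only [hgmid]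
      rw [integral_const_mul, integral_add ((hfeas j).2.1.integrable one_le_two)
        ((hfeas' j).2.1.integrable one_le_two), (hfeas j).2.2, (hfeas' j).2.2]
      ring
  have hsummid : ∀ x : Fin p → ℝ, ∑ j, gmid j (x j) = (1/2 : ℝ) * (G x + G' x) := by
    intro x
    simp only [hgmid, hG, hG']
    rw [← Finset.mul_sum, Finset.sum_add_distrib]
  have hmidobj : addObj μ f c' gmid
      = (1/2 : ℝ) * addObj μ f c' gstar + (1/2 : ℝ) * addObj μ f c' g'
        - (1/4 : ℝ) * ∫ x, (G' x - G x) ^ 2 ∂μ := by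
    have e : (fun x => (f x - c' - ∑ j, gmid j (x j)) ^ 2)
        = fun x => ((1/2 : ℝ) * (f x - c' - G x) ^ 2 + (1/2 : ℝ) * (f x - c' - G' x) ^ 2)
            - (1/4 : ℝ) * (G' x - G x) ^ 2 := by
      funext x
      rw [hsummid x]
      ring
    have e' : addObj μ f c' gmid
        = ∫ x, (((1/2 : ℝ) * (f x - c' - G x) ^ 2 + (1/2 : ℝ) * (f x - c' - G' x) ^ 2)
            - (1/4 : ℝ) * (G' x - G x) ^ 2) ∂μ := by
      simp only [addObj]
      exact integral_congr_ae (Filter.EventuallyEq.of_eq e)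
    have i1 : Integrable (fun x => (1/2 : ℝ) * (f x - c' - G x) ^ 2
        + (1/2 : ℝ) * (f x - c' - G' x) ^ 2) μ := by
      exact (ha2.const_mul _).add (hb2.const_mul _)
    have i2 : Integrable (fun x => (1/4 : ℝ) * (G' x - G x) ^ 2) μ := hd2.const_mul _
    rw [e', integral_sub i1 i2,
      integral_add (ha2.const_mul _) (hb2.const_mul _),
      integral_const_mul, integral_const_mul, integral_const_mul]
    rfl
  have hQle : ∫ x, (G' x - G x) ^ 2 ∂μ ≤ 0 := by
    have hle := hmin c' gmid hfeasmid
    rw [hmidobj, ← hVeq] at hle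
    linarith
  have hQ0 : ∫ x, (G' x - G x) ^ 2 ∂μ = 0 :=
    le_antisymm hQle (integral_nonneg fun x => sq_nonneg _)
  have hGG' : ∀ᵐ x ∂μ, G' x - G x = 0 := by
    have := (integral_eq_zero_iff_of_nonneg (fun x => sq_nonneg (G' x - G x)) hd2).mp hQ0
    filter_upwards [this] with x hx
    have : (G' x - G x) ^ 2 = 0 := hx
    exact sq_eq_zero_iff.mp this
  -- identifiability of the components
  set D : Fin p → ℝ → ℝ := fun j t => g' j t - gstar j t with hD
  have hDm : ∀ j, Measurable (D j) := fun j => (hfeas' j).1.sub (hfeas j).1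
  have hzero : ∀ᵐ x ∂μ, ∑ j, D j (x j) = 0 := by
    filter_upwards [hGG'] with x hx
    have : ∑ j, D j (x j) = G' x - G x := by
      simp only [hD, hG, hG']
      rw [Finset.sum_sub_distrib]
    rw [this, hx]
  intro k
  obtain ⟨c, hc⟩ := BK.ident dens hdenspos hdensmeas hμ D hDm hzero k
  have hDi : Integrable (fun x => D k (x k)) μ := by
    simp only [hD]
    exact ((hfeas' k).2.1.integrable one_le_two).sub ((hfeas k).2.1.integrable one_le_two)
  have hDint : ∫ x, D k (x k) ∂μ = 0 := by
    simp only [hD]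
    rw [integral_sub ((hfeas' k).2.1.integrable one_le_two)
      ((hfeas k).2.1.integrable one_le_two), (hfeas' k).2.2, (hfeas k).2.2, sub_zero]
  have hc0 : c = 0 := by
    have : ∫ x, D k (x k) ∂μ = ∫ _x, c ∂μ := integral_congr_ae hc
    rw [hDint, integral_const] at this
    simpa [measure_univ] using this.symm
  filter_upwards [hc] with x hx
  have : g' k (x k) - gstar k (x k) = c := hx
  rw [hc0] at this
  linarith
end

section
/- With H = [[1.6, 2],[2, 5]] (a positive definite matrix) and the bivariate Gaussian of the previous setup with α = −1/2, the optimal additive component f*_1 is identically zero; hence the quadratic convex function f(x) = xᵀHx + c is not additively faithful under this Gaussian distribution. -/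
/-- With `H = [[1.6, 2],[2, 5]]` (positive definite) and the bivariate Gaussian
with correlation `α = -1/2`, the closed-form coefficient of the optimal additive
component `f*₁` vanishes, i.e. `f*₁ ≡ 0`, although the convex quadratic
`f(x) = xᵀHx + c` depends on `x₁`: additive faithfulness fails. -/
theorem gaussian_unfaithfulness_example :
    let H11 : ℝ := 1.6; let H12 : ℝ := 2; let H22 : ℝ := 5
    let α : ℝ := -1/2
    let T₁ : ℝ := H11 + 2 * H12 * α + H22 * α ^ 2
    let T₂ : ℝ := H22 + 2 * H12 * α + H11 * α ^ 2
    (Matrix.PosDef (Matrix.of ![![H11, H12], ![H12, H22]]))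
    ∧ (T₁ - T₂ * α ^ 2) / (1 - α ^ 4) = 0
    ∧ (∀ c : ℝ, ∃ x₂ : ℝ, ∃ a b : ℝ,
        H11 * a ^ 2 + 2 * H12 * a * x₂ + H22 * x₂ ^ 2 + c
          ≠ H11 * b ^ 2 + 2 * H12 * b * x₂ + H22 * x₂ ^ 2 + c) := by
  refine ⟨?_, by norm_num, fun c => ⟨0, 1, 0, by norm_num⟩⟩
  refine Matrix.posDef_iff_dotProduct_mulVec.mpr ⟨?_, ?_⟩
  · ext i j
    fin_cases i <;> fin_cases j <;> simp [Matrix.conjTranspose, Matrix.transpose, Matrix.vecHead, Matrix.vecTail]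
  · intro x hx
    have h0 : x 0 ≠ 0 ∨ x 1 ≠ 0 := by
      by_contra h
      push_neg at h
      exact hx (funext fun i => by fin_cases i <;> simp [h.1, h.2])
    have hkey : (0:ℝ) < 1.6 * (x 0 + 1.25 * x 1)^2 + 2.5 * (x 1)^2 := by
      rcases h0 with h | h
      · rcases eq_or_ne (x 1) 0 with h1 | h1
        · have : x 0 + 1.25 * x 1 ≠ 0 := by rw [h1]; simpa using h
          nlinarith [sq_pos_of_ne_zero this, sq_nonneg (x 1)]
        · nlinarith [sq_pos_of_ne_zero h1, sq_nonneg (x 0 + 1.25 * x 1)]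
      · nlinarith [sq_pos_of_ne_zero h, sq_nonneg (x 0 + 1.25 * x 1)]
    have : dotProduct x ((Matrix.of ![![(1.6:ℝ), 2], ![2, 5]]).mulVec x)
        = 1.6 * (x 0)^2 + 4 * (x 0) * (x 1) + 5 * (x 1)^2 := by
      simp [dotProduct, Matrix.mulVec, Fin.sum_univ_two]
      ring
    rw [star_trivial, this]
    nlinarith [hkey]
end

section
/- Let f : [0,1]^p → ℝ be twice continuously differentiable and let p(x) be a density on [0,1]^p such that ∂_{x_k} p(x_{-k}|x_k) and ∂²_{x_k} p(x_{-k}|x_k) are continuous. Let φ(x_{-k}) be a continuous function not depending on x_k. Then h*_k(x_k) := E[f(X) − φ(X_{-k}) | X_k = x_k] is twice differentiable and its second derivative is bounded below (bounded away from −∞) on [0,1]. -/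
open MeasureTheory Set

private lemma deriv_under_integral {m : ℕ} (G G' : ℝ → (Fin m → ℝ) → ℝ)
    (hG : Continuous (Function.uncurry G)) (hG' : Continuous (Function.uncurry G'))
    (hd : ∀ (y : Fin m → ℝ) (t : ℝ), HasDerivAt (fun s => G s y) (G' t y) t) (t : ℝ) :
    HasDerivAt (fun s => ∫ y in Icc (0 : Fin m → ℝ) 1, G s y)
      (∫ y in Icc (0 : Fin m → ℝ) 1, G' t y) t := by
  have hIcc : IsCompact (Icc (0 : Fin m → ℝ) 1) := isCompact_Icc
  have hKcpt : IsCompact (Metric.closedBall t 1 ×ˢ Icc (0 : Fin m → ℝ) 1) :=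
    (isCompact_closedBall t 1).prod hIcc
  obtain ⟨C, hC⟩ := hKcpt.exists_bound_of_continuousOn hG'.continuousOn
  have key := hasDerivAt_integral_of_dominated_loc_of_deriv_le (F := G) (F' := G')
    (μ := volume.restrict (Icc (0 : Fin m → ℝ) 1)) (x₀ := t) (bound := fun _ => C)
    (Metric.ball_mem_nhds t one_pos)
    (Filter.Eventually.of_forall fun s =>
      ((hG.comp (continuous_const.prodMk continuous_id)).aestronglyMeasurable))
    ((hG.comp (continuous_const.prodMk continuous_id)).continuousOn.integrableOn_compact hIcc)
    ((hG'.comp (continuous_const.prodMk continuous_id)).aestronglyMeasurable)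
    ?_ ?_ ?_
  · exact key.2
  · filter_upwards [ae_restrict_mem measurableSet_Icc] with y hy
    intro s hs
    exact hC (s, y) ⟨Metric.ball_subset_closedBall hs, hy⟩
  · exact integrableOn_const hIcc.measure_lt_top.ne
  · exact Filter.Eventually.of_forall fun y => fun s _ => hd y s

/-- Lemma A.1: if `f` is twice continuously differentiable, the conditional density
`q(t, y) = p(x_{-k} = y | x_k = t)` has continuous first and second partial
derivatives in `t`, and `φ` is continuous (not depending on `x_k`), then
`h⋆(t) = E[f(X) - φ(X_{-k}) | X_k = t] = ∫ (f(t,y) - φ(y)) q(t,y) dy`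
is twice differentiable on `[0,1]` with second derivative bounded below. -/
theorem conditional_mean_twice_differentiable (m : ℕ)
    (f : ℝ → (Fin m → ℝ) → ℝ)
    (hf : ContDiff ℝ 2 (Function.uncurry f))
    (φ : (Fin m → ℝ) → ℝ) (hφ : Continuous φ)
    (q q' q'' : ℝ → (Fin m → ℝ) → ℝ)
    (hq : Continuous (Function.uncurry q))
    (hq' : Continuous (Function.uncurry q'))
    (hq'' : Continuous (Function.uncurry q''))
    (hqderiv : ∀ (y : Fin m → ℝ) (t : ℝ), HasDerivAt (fun s => q s y) (q' t y) t)
    (hq'deriv : ∀ (y : Fin m → ℝ) (t : ℝ), HasDerivAt (fun s => q' s y) (q'' t y) t)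
    (h : ℝ → ℝ)
    (hdef : ∀ t : ℝ,
      h t = ∫ y in Icc (0 : Fin m → ℝ) 1, (f t y - φ y) * q t y) :
    ∃ h' h'' : ℝ → ℝ,
      (∀ t ∈ Icc (0:ℝ) 1, HasDerivAt h (h' t) t)
      ∧ (∀ t ∈ Icc (0:ℝ) 1, HasDerivAt h' (h'' t) t)
      ∧ ∃ L : ℝ, ∀ t ∈ Icc (0:ℝ) 1, L ≤ h'' t := by
  classical
  -- first partial derivative of f in t
  set F1 : ℝ × (Fin m → ℝ) → ℝ :=
    fun p => fderiv ℝ (Function.uncurry f) p (1, 0) with hF1def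
  have hF1 : ContDiff ℝ 1 F1 := by
    have : ContDiff ℝ 1 (fderiv ℝ (Function.uncurry f)) :=
      hf.fderiv_right (le_refl 2)
    exact this.clm_apply contDiff_const
  set F2 : ℝ × (Fin m → ℝ) → ℝ := fun p => fderiv ℝ F1 p (1, 0) with hF2def
  have hF2cont : Continuous F2 := by
    have : Continuous (fderiv ℝ F1) := hF1.continuous_fderiv one_ne_zero
    exact this.clm_apply continuous_const
  have hF1cont : Continuous F1 := hF1.continuous
  have hcurve : ∀ (y : Fin m → ℝ) (t : ℝ),
      HasDerivAt (fun s : ℝ => (s, y)) ((1 : ℝ), (0 : Fin m → ℝ)) t := fun y t =>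
    (hasDerivAt_id t).prodMk (hasDerivAt_const t y)
  have hfd : ∀ (y : Fin m → ℝ) (t : ℝ), HasDerivAt (fun s => f s y) (F1 (t, y)) t := by
    intro y t
    have hdiff : HasFDerivAt (Function.uncurry f) (fderiv ℝ (Function.uncurry f) (t, y)) (t, y) :=
      (hf.differentiable two_ne_zero (t, y)).hasFDerivAt
    exact hdiff.comp_hasDerivAt t (hcurve y t)
  have hf1d : ∀ (y : Fin m → ℝ) (t : ℝ),
      HasDerivAt (fun s => F1 (s, y)) (F2 (t, y)) t := by
    intro y t
    have hdiff : HasFDerivAt F1 (fderiv ℝ F1 (t, y)) (t, y) :=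
      (hF1.differentiable one_ne_zero (t, y)).hasFDerivAt
    exact hdiff.comp_hasDerivAt t (hcurve y t)
  -- define integrands
  set G : ℝ → (Fin m → ℝ) → ℝ := fun t y => (f t y - φ y) * q t y with hGdef
  set G' : ℝ → (Fin m → ℝ) → ℝ :=
    fun t y => F1 (t, y) * q t y + (f t y - φ y) * q' t y with hG'def
  set G'' : ℝ → (Fin m → ℝ) → ℝ :=
    fun t y => (F2 (t, y) * q t y + F1 (t, y) * q' t y) +
      (F1 (t, y) * q' t y + (f t y - φ y) * q'' t y) with hG''def
  have hfc : Continuous (Function.uncurry f) := hf.continuous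
  have hGc : Continuous (Function.uncurry G) := by
    apply Continuous.mul
    · exact hfc.sub (hφ.comp continuous_snd)
    · exact hq
  have hG'c : Continuous (Function.uncurry G') := by
    apply Continuous.add
    · exact hF1cont.mul hq
    · exact (hfc.sub (hφ.comp continuous_snd)).mul hq'
  have hG''c : Continuous (Function.uncurry G'') := by
    apply Continuous.add
    · exact (hF2cont.mul hq).add (hF1cont.mul hq')
    · exact (hF1cont.mul hq').add ((hfc.sub (hφ.comp continuous_snd)).mul hq'')
  have hGd : ∀ (y : Fin m → ℝ) (t : ℝ), HasDerivAt (fun s => G s y) (G' t y) t := by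
    intro y t
    exact ((hfd y t).sub_const (φ y)).mul (hqderiv y t)
  have hG'd : ∀ (y : Fin m → ℝ) (t : ℝ), HasDerivAt (fun s => G' s y) (G'' t y) t := by
    intro y t
    exact ((hf1d y t).mul (hqderiv y t)).add
      (((hfd y t).sub_const (φ y)).mul (hq'deriv y t))
  refine ⟨fun t => ∫ y in Icc (0 : Fin m → ℝ) 1, G' t y,
    fun t => ∫ y in Icc (0 : Fin m → ℝ) 1, G'' t y, ?_, ?_, ?_⟩
  · intro t _
    have hfun : h = fun s => ∫ y in Icc (0 : Fin m → ℝ) 1, G s y := funext hdef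
    rw [hfun]
    exact deriv_under_integral G G' hGc hG'c hGd t
  · intro t _
    exact deriv_under_integral G' G'' hG'c hG''c hG'd t
  · -- lower bound
    have hIcc : IsCompact (Icc (0 : Fin m → ℝ) 1) := isCompact_Icc
    have hKcpt : IsCompact (Icc (0:ℝ) 1 ×ˢ Icc (0 : Fin m → ℝ) 1) :=
      isCompact_Icc.prod hIcc
    obtain ⟨C, hC⟩ := hKcpt.exists_bound_of_continuousOn hG''c.continuousOn
    refine ⟨-(C * (volume (Icc (0 : Fin m → ℝ) 1)).toReal), fun t ht => ?_⟩
    have hb : ‖∫ y in Icc (0 : Fin m → ℝ) 1, G'' t y‖ ≤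
        C * (volume (Icc (0 : Fin m → ℝ) 1)).toReal := by
      apply norm_setIntegral_le_of_norm_le_const hIcc.measure_lt_top
        (fun y hy => hC (t, y) ⟨ht, hy⟩)
    have := neg_le_of_abs_le (by rwa [Real.norm_eq_abs] at hb)
    linarith
end

section
/- Let p(x) be a strictly positive density on [0,1]^p and let φ(x) = Σ_{j=1}^p φ_j(x_j) be an additive function with each φ_j bounded and E[φ_j(X_j)] = 0. If E[φ_j(X_j)²] > 0 for some j, then E[φ(X)²] > 0. -/
open MeasureTheory Set Finset
open scoped ENNReal

lemma restrict_pi_pi' {ι : Type*} [Fintype ι] {α : ι → Type*} [∀ i, MeasurableSpace (α i)]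
    (μ : ∀ i, Measure (α i)) [∀ i, SigmaFinite (μ i)] (s : ∀ i, Set (α i))
    (hs : ∀ i, MeasurableSet (s i)) :
    (Measure.pi μ).restrict (Set.pi univ s) = Measure.pi (fun i => (μ i).restrict (s i)) := by
  refine (Measure.pi_eq (μ := fun i => (μ i).restrict (s i)) (fun t ht => ?_)).symm
  rw [Measure.restrict_apply (MeasurableSet.univ_pi ht), ← Set.pi_inter_distrib,
    Measure.pi_pi]
  exact Finset.prod_congr rfl fun i _ => (Measure.restrict_apply (ht i)).symm

lemma measurePreserving_update_prod {ι : Type*} [Fintype ι] [DecidableEq ι]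
    {α : Type*} [MeasurableSpace α] (m : Measure α) [IsProbabilityMeasure m] (j : ι) :
    MeasurePreserving (fun xy : (ι → α) × (ι → α) => Function.update xy.1 j (xy.2 j))
      ((Measure.pi fun _ : ι => m).prod (Measure.pi fun _ : ι => m))
      (Measure.pi fun _ : ι => m) := by
  have hgm : Measurable fun xy : (ι → α) × (ι → α) => Function.update xy.1 j (xy.2 j) := by
    refine measurable_pi_lambda _ fun k => ?_
    simp only [Function.update_apply]
    by_cases h : k = j
    · simp only [h, if_pos rfl]
      exact (measurable_pi_apply j).comp measurable_snd
    · simp only [if_neg h]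
      exact (measurable_pi_apply k).comp measurable_fst
  refine ⟨hgm, ?_⟩
  refine (Measure.pi_eq fun s hs => ?_).symm
  rw [Measure.map_apply hgm (MeasurableSet.univ_pi hs)]
  have hpre : (fun xy : (ι → α) × (ι → α) => Function.update xy.1 j (xy.2 j)) ⁻¹'
        (Set.pi univ s)
      = (Set.pi univ (Function.update s j univ)) ×ˢ
        (Set.pi univ (Function.update (fun _ => (univ : Set α)) j (s j))) := by
    ext ⟨x, y⟩
    simp only [Set.mem_preimage, Set.mem_prod, Set.mem_univ_pi]
    constructor
    · intro h
      constructor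
      · intro k
        rcases eq_or_ne k j with rfl | hk
        · simp
        · have := h k
          simp only [Function.update_apply, if_neg hk] at this ⊢
          exact this
      · intro k
        rcases eq_or_ne k j with rfl | hk
        · have := h k
          simp only [Function.update_apply, if_pos rfl] at this ⊢
          exact this
        · simp [Function.update_apply, if_neg hk]
    · rintro ⟨h1, h2⟩ k
      rcases eq_or_ne k j with rfl | hk
      · have := h2 k
        simp only [Function.update_apply, if_pos rfl] at this ⊢
        exact this
      · have := h1 k
        simp only [Function.update_apply, if_neg hk] at this ⊢
        exact this
  rw [hpre, Measure.prod_prod, Measure.pi_pi, Measure.pi_pi, ← Finset.prod_mul_distrib]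
  refine Finset.prod_congr rfl fun k _ => ?_
  by_cases hk : k = j
  · subst hk; simp [measure_univ]
  · rw [Function.update_of_ne hk, Function.update_of_ne hk]
    simp [measure_univ]

/-- Nontrivial centered additive functions are nonzero in `L²`: if `X` has a
strictly positive density on `[0,1]^p`, each `φⱼ` is bounded, measurable and
mean zero, and some component has positive second moment, then the additive
function `φ(x) = ∑ⱼ φⱼ(xⱼ)` has positive second moment. -/
theorem additive_uniqueness (p : ℕ) (dens : (Fin p → ℝ) → ℝ≥0∞)
    (hdens : ∀ x ∈ Icc (0 : Fin p → ℝ) 1, 0 < dens x)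
    (hmeas : Measurable dens)
    (μ : Measure (Fin p → ℝ))
    (hμ : μ = (volume.restrict (Icc (0 : Fin p → ℝ) 1)).withDensity dens)
    (hprob : IsProbabilityMeasure μ)
    (φ : Fin p → ℝ → ℝ)
    (hφmeas : ∀ j, Measurable (φ j))
    (hφbdd : ∀ j, ∃ C : ℝ, ∀ t : ℝ, |φ j t| ≤ C)
    (hφmean : ∀ j, ∫ x, φ j (x j) ∂μ = 0)
    (j : Fin p) (hj : 0 < ∫ x, (φ j (x j)) ^ 2 ∂μ) :
    0 < ∫ x, (∑ k, φ k (x k)) ^ 2 ∂μ := by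
  classical
  set ν₁ : Measure ℝ := volume.restrict (Icc (0:ℝ) 1) with hν₁
  haveI hν₁prob : IsProbabilityMeasure ν₁ := by
    constructor
    rw [hν₁, Measure.restrict_apply_univ, Real.volume_Icc]
    norm_num
  set ν : Measure (Fin p → ℝ) := Measure.pi fun _ : Fin p => ν₁ with hν
  haveI hνprob : IsProbabilityMeasure ν := by rw [hν]; infer_instance
  have hIcc : (Icc (0 : Fin p → ℝ) 1) = Set.pi univ (fun _ : Fin p => Icc (0:ℝ) 1) :=
    (Set.pi_univ_Icc (0 : Fin p → ℝ) 1).symm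
  have hνeq : volume.restrict (Icc (0 : Fin p → ℝ) 1) = ν := by
    rw [hIcc, hν, hν₁, volume_pi,
      restrict_pi_pi' (fun _ : Fin p => volume) (fun _ => Icc (0:ℝ) 1)
        (fun _ => measurableSet_Icc)]
  have hμν : μ = ν.withDensity dens := by rw [hμ, hνeq]
  -- boundedness and integrability
  obtain ⟨C, hC⟩ : ∃ C : ℝ, ∀ x : Fin p → ℝ, |∑ k, φ k (x k)| ≤ C := by
    choose c hc using hφbdd
    exact ⟨∑ k, c k, fun x =>
      (Finset.abs_sum_le_sum_abs _ _).trans (Finset.sum_le_sum fun k _ => hc k _)⟩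
  have hFmeas : Measurable fun x : Fin p → ℝ => ∑ k, φ k (x k) :=
    Finset.measurable_sum _ fun k _ => (hφmeas k).comp (measurable_pi_apply k)
  have hint : Integrable (fun x => (∑ k, φ k (x k))^2) μ := by
    refine (integrable_const (C^2)).mono' ((hFmeas.pow_const 2).aestronglyMeasurable)
      (ae_of_all _ fun x => ?_)
    have h1 := hC x
    have h2 : ‖(∑ k, φ k (x k))^2‖ = |∑ k, φ k (x k)|^2 := by
      rw [Real.norm_eq_abs, abs_of_nonneg (sq_nonneg _), sq_abs]
    rw [h2]
    exact pow_le_pow_left₀ (abs_nonneg _) h1 2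
  by_contra hcon
  push_neg at hcon
  have hI0 : ∫ x, (∑ k, φ k (x k))^2 ∂μ = 0 :=
    le_antisymm hcon (integral_nonneg fun x => sq_nonneg _)
  have hae0 : ∀ᵐ x ∂μ, (∑ k, φ k (x k)) = 0 := by
    have h := (integral_eq_zero_iff_of_nonneg (fun x => sq_nonneg _) hint).mp hI0
    filter_upwards [h] with x hx
    exact pow_eq_zero_iff two_ne_zero |>.mp hx
  -- transfer to Lebesgue measure on the cube
  have haeν : ∀ᵐ x ∂ν, ∑ k, φ k (x k) = 0 := by
    rw [hμν] at hae0
    have h1 : ∀ᵐ x ∂ν, dens x ≠ 0 → ∑ k, φ k (x k) = 0 :=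
      (ae_withDensity_iff hmeas).mp hae0
    have h2 : ∀ᵐ x ∂ν, x ∈ Icc (0 : Fin p → ℝ) 1 := by
      rw [← hνeq]; exact ae_restrict_mem measurableSet_Icc
    filter_upwards [h1, h2] with x h1x h2x
    exact h1x (hdens x h2x).ne'
  -- two-copy update trick
  have hmp := measurePreserving_update_prod (ι := Fin p) ν₁ j
  have hg : ∀ᵐ xy : (Fin p → ℝ) × (Fin p → ℝ) ∂ν.prod ν,
      ∑ k, φ k (Function.update xy.1 j (xy.2 j) k) = 0 :=
    hmp.quasiMeasurePreserving.tendsto_ae.eventually haeν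
  have hfst : ∀ᵐ xy : (Fin p → ℝ) × (Fin p → ℝ) ∂ν.prod ν, ∑ k, φ k (xy.1 k) = 0 :=
    (Measure.quasiMeasurePreserving_fst).tendsto_ae.eventually haeν
  have hkey : ∀ᵐ xy : (Fin p → ℝ) × (Fin p → ℝ) ∂ν.prod ν,
      φ j (xy.2 j) = φ j (xy.1 j) := by
    filter_upwards [hg, hfst] with xy h1 h2
    have e1 : ∑ k, φ k (Function.update xy.1 j (xy.2 j) k)
        = φ j (xy.2 j) + ∑ k ∈ Finset.univ.erase j, φ k (xy.1 k) := by
      have heq : (fun k => φ k (Function.update xy.1 j (xy.2 j) k))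
          = Function.update (fun k => φ k (xy.1 k)) j (φ j (xy.2 j)) := by
        funext k
        exact Function.apply_update (fun i t => φ i t) xy.1 j (xy.2 j) k
      rw [heq, Finset.sum_update_of_mem (Finset.mem_univ j),
        Finset.sdiff_singleton_eq_erase]
    have e2 : ∑ k, φ k (xy.1 k)
        = φ j (xy.1 j) + ∑ k ∈ Finset.univ.erase j, φ k (xy.1 k) :=
      (Finset.add_sum_erase _ _ (Finset.mem_univ j)).symm
    rw [e1] at h1
    rw [e2] at h2
    linarith
  have hae2 := Measure.ae_ae_of_ae_prod hkey
  haveI : (ae ν).NeBot := ae_neBot.2 (IsProbabilityMeasure.ne_zero ν)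
  obtain ⟨x₀, hx₀⟩ := hae2.exists
  set c := φ j (x₀ j) with hc
  have hμac : μ ≪ ν := by
    rw [hμν]; exact withDensity_absolutelyContinuous ν dens
  have hcμ : ∀ᵐ y ∂μ, φ j (y j) = c := hμac.ae_le hx₀
  have hc0 : c = 0 := by
    have h := integral_congr_ae (μ := μ) (f := fun y => φ j (y j)) (g := fun _ => c) hcμ
    rw [hφmean j] at h
    simpa [integral_const, measure_univ] using h.symm
  have hzero : ∫ x, (φ j (x j))^2 ∂μ = 0 := by
    have h0 : (fun x : Fin p → ℝ => (φ j (x j))^2) =ᵐ[μ] fun _ => (0:ℝ) := by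
      filter_upwards [hcμ] with x hx
      rw [hx, hc0]; ring
    rw [integral_congr_ae h0]
    simp
  exact hj.ne' hzero
end

section
/- Serfling's corollary for sampling without replacement: let x₁,…,x_N be a finite list of reals with mean zero, and let X₁,…,X_n be sampled from the list without replacement, with S_n = Σᵢ Xᵢ, b = max xᵢ, a = min xᵢ. Then P(|S_n/N| ≥ ε) ≤ 2·exp(−2Nε²/(b−a)²). -/
open Finset Real

lemma two_point (p q u : ℝ) (hp : 0 ≤ p) (hq : 0 ≤ q) (hpq : p + q = 1) :
    p * exp (-(q * u)) + q * exp (p * u) ≤ exp (u ^ 2 / 8) := by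
  have hpos : ∀ y : ℝ, 0 < p + q * exp y := by
    intro y
    rcases eq_or_lt_of_le hq with h | h
    · simp [← h] at hpq ⊢; linarith
    · positivity
  -- g y = y^2/8 + q*y - log (p + q * exp y) is nonneg
  set g : ℝ → ℝ := fun y => y ^ 2 / 8 + q * y - log (p + q * exp y) with hg
  have hderiv : ∀ y, HasDerivAt g (y / 4 + q - q * exp y / (p + q * exp y)) y := by
    intro y
    have h1 : HasDerivAt (fun y : ℝ => p + q * exp y) (q * exp y) y :=
      ((Real.hasDerivAt_exp y).const_mul q).const_add p
    have h2 : HasDerivAt (fun y : ℝ => log (p + q * exp y)) (q * exp y / (p + q * exp y)) y :=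
      h1.log (hpos y).ne'
    have h3 : HasDerivAt (fun y : ℝ => y ^ 2 / 8 + q * y) (y / 4 + q) y := by
      have := ((hasDerivAt_pow 2 y).div_const 8).add ((hasDerivAt_id y).const_mul q)
      exact this.congr_deriv (by norm_num; ring)
    exact h3.sub h2
  have hderiv2 : ∀ y, HasDerivAt (fun y => y / 4 + q - q * exp y / (p + q * exp y))
      (1 / 4 - p * q * exp y / (p + q * exp y) ^ 2) y := by
    intro y
    have h1 : HasDerivAt (fun y : ℝ => p + q * exp y) (q * exp y) y :=
      ((Real.hasDerivAt_exp y).const_mul q).const_add p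
    have h2 : HasDerivAt (fun y : ℝ => q * exp y) (q * exp y) y :=
      (Real.hasDerivAt_exp y).const_mul q
    have h4 : HasDerivAt (fun y : ℝ => q * exp y / (p + q * exp y))
        ((q * exp y * (p + q * exp y) - q * exp y * (q * exp y)) / (p + q * exp y) ^ 2) y :=
      h2.div h1 (hpos y).ne'
    have h5 : HasDerivAt (fun y : ℝ => y / 4 + q) (1 / 4) y := by
      simpa using ((hasDerivAt_id y).div_const 4).add_const q
    exact (h5.sub h4).congr_deriv (by ring)
  have hmono : Monotone (fun y => y / 4 + q - q * exp y / (p + q * exp y)) := by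
    apply monotone_of_deriv_nonneg
    · exact fun y => (hderiv2 y).differentiableAt
    · intro y
      rw [(hderiv2 y).deriv]
      have hsq : 0 ≤ (p - q * exp y) ^ 2 := sq_nonneg _
      have : 4 * (p * q * exp y) ≤ (p + q * exp y) ^ 2 := by nlinarith [exp_pos y]
      have h2 : (0:ℝ) < (p + q * exp y) ^ 2 := pow_pos (hpos y) 2
      rw [sub_nonneg, div_le_iff₀ h2]
      linarith
  have hg'0 : (0:ℝ) / 4 + q - q * exp 0 / (p + q * exp 0) = 0 := by
    simp [hpq]
  have hg0 : g 0 = 0 := by simp [hg, hpq]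
  have hgdiff : Differentiable ℝ g := fun y => (hderiv y).differentiableAt
  have hgnn : ∀ y, 0 ≤ g y := by
    intro y
    rcases le_total 0 y with h | h
    · have hm : MonotoneOn g (Set.Ici 0) := by
        apply monotoneOn_of_deriv_nonneg (convex_Ici 0) hgdiff.continuous.continuousOn
          (fun y _ => (hgdiff y).differentiableWithinAt)
        intro z hz
        rw [(hderiv z).deriv]
        have h0 : (0:ℝ) ≤ z := le_of_lt (by simpa using hz)
        have := hmono h0
        simp only at this
        linarith [this, hg'0.ge, hg'0.le]
      have := hm (Set.self_mem_Ici) (Set.mem_Ici.2 h) h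
      rwa [hg0] at this
    · have hm : AntitoneOn g (Set.Iic 0) := by
        apply antitoneOn_of_deriv_nonpos (convex_Iic 0) hgdiff.continuous.continuousOn
          (fun y _ => (hgdiff y).differentiableWithinAt)
        intro z hz
        rw [(hderiv z).deriv]
        have h0 : z ≤ (0:ℝ) := le_of_lt (by simpa using hz)
        have := hmono h0
        simp only at this
        linarith [this, hg'0.ge, hg'0.le]
      have := hm (Set.mem_Iic.2 h) (Set.self_mem_Iic) h
      rwa [hg0] at this
  -- conclude
  have key := hgnn u
  have hrw : p * exp (-(q * u)) + q * exp (p * u) = exp (-(q*u)) * (p + q * exp u) := by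
    have h : exp (p * u) = exp (-(q*u)) * exp u := by
      rw [← exp_add]
      congr 1
      linear_combination u * hpq
    rw [h]
    ring
  rw [hrw]
  have hlog : exp (-(q*u)) * (p + q * exp u) = exp (-(q*u) + log (p + q * exp u)) := by
    rw [exp_add, exp_log (hpos u)]
  rw [hlog, exp_le_exp]
  simp only [g] at key
  linarith

lemma finset_hoeffding {ι : Type*} [DecidableEq ι] (s : Finset ι) (hs : s.Nonempty)
    (v : ι → ℝ) (a b : ℝ) (ha : ∀ j ∈ s, a ≤ v j) (hb : ∀ j ∈ s, v j ≤ b) (t : ℝ) :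
    ∑ j ∈ s, exp (t * v j) ≤
      s.card * exp (t * ((∑ j ∈ s, v j) / s.card) + t ^ 2 * (b - a) ^ 2 / 8) := by
  have hM : (0:ℝ) < s.card := by exact_mod_cast card_pos.2 hs
  set M : ℝ := (s.card : ℝ) with hMdef
  set μ : ℝ := (∑ j ∈ s, v j) / M with hmu
  have hμa : a ≤ μ := by
    rw [hmu, le_div_iff₀ hM]
    calc a * M = ∑ _j ∈ s, a := by rw [sum_const, nsmul_eq_mul]; ring
    _ ≤ ∑ j ∈ s, v j := sum_le_sum ha
  have hμb : μ ≤ b := by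
    rw [hmu, div_le_iff₀ hM]
    calc ∑ j ∈ s, v j ≤ ∑ _j ∈ s, b := sum_le_sum hb
    _ = b * M := by rw [sum_const, nsmul_eq_mul]; ring
  rcases eq_or_lt_of_le (le_trans hμa hμb) with hab | hab
  · -- a = b : all values equal a
    have hv : ∀ j ∈ s, v j = a := fun j hj => le_antisymm (hab ▸ hb j hj) (ha j hj)
    have hμ : μ = a := le_antisymm (hab ▸ hμb) hμa
    have : ∑ j ∈ s, exp (t * v j) = M * exp (t * μ) := by
      rw [hμ, ← nsmul_eq_mul, ← sum_const]
      exact sum_congr rfl fun j hj => by rw [hv j hj]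
    rw [this]
    apply mul_le_mul_of_nonneg_left _ hM.le
    rw [exp_le_exp]
    nlinarith [sq_nonneg (t * (b-a))]
  · -- a < b
    set c : ℝ := b - a with hc
    have hcpos : 0 < c := by rw [hc]; linarith
    set p : ℝ := (b - μ) / c with hp
    set q : ℝ := (μ - a) / c with hq
    have hppos : 0 ≤ p := div_nonneg (by linarith) hcpos.le
    have hqpos : 0 ≤ q := div_nonneg (by linarith) hcpos.le
    have hpq : p + q = 1 := by
      rw [hp, hq, ← add_div, div_eq_one_iff_eq hcpos.ne']
      rw [hc]; ring
    -- convexity bound for each term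
    have step1 : ∑ j ∈ s, exp (t * v j) ≤
        ∑ j ∈ s, (((b - v j) / c) * exp (t * a) + ((v j - a) / c) * exp (t * b)) := by
      apply sum_le_sum
      intro j hj
      have h1 : 0 ≤ (b - v j) / c := div_nonneg (by linarith [hb j hj]) hcpos.le
      have h2 : 0 ≤ (v j - a) / c := div_nonneg (by linarith [ha j hj]) hcpos.le
      have h3 : (b - v j) / c + (v j - a) / c = 1 := by field_simp; rw [hc]; ring
      have h4 : ((b - v j) / c) • (t * a) + ((v j - a) / c) • (t * b) = t * v j := by
        rw [smul_eq_mul, smul_eq_mul]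
        have : (b - v j) / c * (t * a) + (v j - a) / c * (t * b) = t * v j * ((b - a) / c) := by ring
        rw [this, ← hc, div_self hcpos.ne', mul_one]
      have := convexOn_exp.2 (Set.mem_univ (t * a)) (Set.mem_univ (t * b)) h1 h2 h3
      rw [h4] at this
      simpa using this
    have step2 : ∑ j ∈ s, (((b - v j) / c) * exp (t * a) + ((v j - a) / c) * exp (t * b))
        = M * (p * exp (t * a) + q * exp (t * b)) := by
      rw [sum_add_distrib, ← sum_mul, ← sum_mul, ← sum_div, ← sum_div]
      have e1 : ∑ j ∈ s, (b - v j) = M * b - M * μ := by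
        rw [sum_sub_distrib, sum_const, nsmul_eq_mul, hmu]
        field_simp
        linear_combination (-b) * hMdef
      have e2 : ∑ j ∈ s, (v j - a) = M * μ - M * a := by
        rw [sum_sub_distrib, sum_const, nsmul_eq_mul, hmu]
        field_simp
        linear_combination a * hMdef
      rw [e1, e2, hp, hq]
      field_simp
    have step3 : p * exp (t * a) + q * exp (t * b) ≤ exp (t * μ + t ^ 2 * c ^ 2 / 8) := by
      have key := two_point p q (t * c) hppos hqpos hpq
      have ea : t * a = t * μ + -(q * (t * c)) := by
        rw [hq]
        field_simp
        ring
      have eb : t * b = t * μ + p * (t * c) := by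
        rw [hp]
        field_simp
        ring
      calc p * exp (t * a) + q * exp (t * b)
          = exp (t * μ) * (p * exp (-(q * (t * c))) + q * exp (p * (t * c))) := by
            rw [ea, eb, exp_add, exp_add]; ring
        _ ≤ exp (t * μ) * exp ((t * c) ^ 2 / 8) := by
            apply mul_le_mul_of_nonneg_left key (exp_pos _).le
        _ = exp (t * μ + t ^ 2 * c ^ 2 / 8) := by rw [← exp_add]; ring_nf
    calc ∑ j ∈ s, exp (t * v j) ≤ M * (p * exp (t * a) + q * exp (t * b)) := step1.trans step2.le
      _ ≤ M * exp (t * μ + t ^ 2 * c ^ 2 / 8) := mul_le_mul_of_nonneg_left step3 hM.le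

def SS (N : ℕ) (x : Fin N → ℝ) (k : ℕ) (σ : Equiv.Perm (Fin N)) : ℝ :=
  ∑ i ∈ Finset.univ.filter (fun i : Fin N => (i : ℕ) < k), x (σ i)

lemma J_card (N k : ℕ) (hk : k < N) :
    (Finset.univ.filter (fun j : Fin N => k ≤ (j : ℕ))).card = N - k := by
  have : Finset.univ.filter (fun j : Fin N => k ≤ (j : ℕ)) = Ici (⟨k, hk⟩ : Fin N) := by
    ext j
    simp [Fin.le_def]
  rw [this, Fin.card_Ici]

lemma J_sum (N k : ℕ) (hk : k < N) (x : Fin N → ℝ) (hmean : ∑ i, x i = 0)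
    (σ : Equiv.Perm (Fin N)) :
    ∑ j ∈ Finset.univ.filter (fun j : Fin N => k ≤ (j : ℕ)), x (σ j) = - SS N x k σ := by
  have hsplit : ∑ j ∈ Finset.univ.filter (fun j : Fin N => (j : ℕ) < k), x (σ j)
      + ∑ j ∈ Finset.univ.filter (fun j : Fin N => k ≤ (j : ℕ)), x (σ j) = ∑ j, x (σ j) := by
    rw [← Finset.sum_filter_add_sum_filter_not Finset.univ (fun j : Fin N => (j : ℕ) < k)]
    congr 1
    apply Finset.sum_congr _ (fun _ _ => rfl)
    apply Finset.filter_congr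
    intro j _
    simp [not_lt]
  have htot : ∑ j, x (σ j) = 0 := by
    rw [Equiv.sum_comp σ x]; exact hmean
  rw [htot] at hsplit
  unfold SS
  linarith

lemma swap_step (N : ℕ) (x : Fin N → ℝ) (k : ℕ) (hk : k < N) (t : ℝ) :
    ((N - k : ℕ) : ℝ) * ∑ σ : Equiv.Perm (Fin N), exp (t * SS N x (k+1) σ) =
    ∑ σ : Equiv.Perm (Fin N), exp (t * SS N x k σ) *
      ∑ j ∈ Finset.univ.filter (fun j : Fin N => k ≤ (j : ℕ)), exp (t * x (σ j)) := by
  set p : Fin N := ⟨k, hk⟩ with hp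
  set J := Finset.univ.filter (fun j : Fin N => k ≤ (j : ℕ)) with hJ
  have hpJ : p ∈ J := by simp [hJ, hp]
  have key : ∀ j ∈ J, (∑ σ : Equiv.Perm (Fin N), exp (t * SS N x (k+1) σ)) =
      ∑ σ : Equiv.Perm (Fin N), exp (t * SS N x k σ) * exp (t * x (σ j)) := by
    intro j hj
    have hjk : k ≤ (j : ℕ) := by simpa [hJ] using hj
    refine (Fintype.sum_equiv (Equiv.mulRight (Equiv.swap p j)) _ _ ?_).symm
    intro σ
    simp only [Equiv.coe_mulRight]
    have hS : SS N x (k+1) (σ * Equiv.swap p j) = SS N x k σ + x (σ j) := by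
      unfold SS
      have hfil : Finset.univ.filter (fun i : Fin N => (i : ℕ) < k + 1)
          = insert p (Finset.univ.filter (fun i : Fin N => (i : ℕ) < k)) := by
        ext i
        simp only [Finset.mem_filter, Finset.mem_univ, true_and, Finset.mem_insert]
        rw [Nat.lt_succ_iff_lt_or_eq]
        constructor
        · rintro (h | h)
          · exact Or.inr (by simpa using h)
          · exact Or.inl (by rw [hp]; exact Fin.ext h)
        · rintro (h | h)
          · exact Or.inr (by rw [h])
          · exact Or.inl (by simpa using h)
      have hpnot : p ∉ Finset.univ.filter (fun i : Fin N => (i : ℕ) < k) := by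
        simp [hp]
      rw [hfil, Finset.sum_insert hpnot]
      have h1 : x ((σ * Equiv.swap p j) p) = x (σ j) := by
        simp [Equiv.Perm.mul_apply]
      have h2 : ∀ i ∈ Finset.univ.filter (fun i : Fin N => (i : ℕ) < k),
          x ((σ * Equiv.swap p j) i) = x (σ i) := by
        intro i hi
        have hik : (i : ℕ) < k := by simpa using hi
        have hne1 : i ≠ p := by
          intro h; rw [h, hp] at hik; simp at hik
        have hne2 : i ≠ j := by
          intro h; rw [h] at hik; omega
        simp [Equiv.Perm.mul_apply, Equiv.swap_apply_of_ne_of_ne hne1 hne2]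
      rw [h1, Finset.sum_congr rfl h2]
      ring
    rw [hS, mul_add, exp_add]
  calc ((N - k : ℕ) : ℝ) * ∑ σ : Equiv.Perm (Fin N), exp (t * SS N x (k+1) σ)
      = ∑ _j ∈ J, ∑ σ : Equiv.Perm (Fin N), exp (t * SS N x (k+1) σ) := by
        rw [Finset.sum_const, hJ, J_card N k hk, nsmul_eq_mul]
    _ = ∑ j ∈ J, ∑ σ : Equiv.Perm (Fin N), exp (t * SS N x k σ) * exp (t * x (σ j)) :=
        Finset.sum_congr rfl key
    _ = ∑ σ : Equiv.Perm (Fin N), exp (t * SS N x k σ) *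
        ∑ j ∈ J, exp (t * x (σ j)) := by
        rw [Finset.sum_comm]
        exact Finset.sum_congr rfl fun σ _ => by rw [Finset.mul_sum]

lemma Bsum_le (N : ℕ) : ∀ n, n < N →
    ∑ j ∈ Finset.range n, (1 / ((N:ℝ) - j - 1)) ^ 2 ≤ (N:ℝ) / ((N:ℝ) - n) ^ 2 := by
  intro n
  induction n with
  | zero => intro h; simp; positivity
  | succ n ih =>
    intro h
    have hn : n < N := Nat.lt_of_succ_lt h
    have ihn := ih hn
    rw [Finset.sum_range_succ]
    have hm2 : (2:ℝ) ≤ (N:ℝ) - n := by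
      have : n + 2 ≤ N := h
      have := (Nat.cast_le (α := ℝ)).2 this
      push_cast at this
      linarith
    have hmN : (N:ℝ) - n ≤ N := by
      have : (0:ℝ) ≤ n := Nat.cast_nonneg n
      linarith
    set m : ℝ := (N:ℝ) - n with hmdef
    have hgoalcast : (N:ℝ) - (n+1:ℕ) = m - 1 := by push_cast; rw [hmdef]; ring
    have hnewterm : (1 / ((N:ℝ) - n - 1)) ^ 2 = (1/(m-1))^2 := by rw [hmdef]
    push_cast
    have key : (N:ℝ) / m ^ 2 + (1 / (m - 1)) ^ 2 ≤ (N:ℝ) / (m - 1) ^ 2 := by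
      have h1 : (0:ℝ) < m - 1 := by linarith
      have h2 : (0:ℝ) < m := by linarith
      have hm2' : m ^ 2 ≤ (N:ℝ) * (2 * m - 1) := by nlinarith
      have hiden : (N:ℝ)/(m-1)^2 - (N:ℝ)/m^2 - (1/(m-1))^2
          = ((N:ℝ)*(2*m-1) - m^2)/(m^2*(m-1)^2) := by
        field_simp
        ring
      have hnn : (0:ℝ) ≤ ((N:ℝ)*(2*m-1) - m^2)/(m^2*(m-1)^2) :=
        div_nonneg (by linarith) (by positivity)
      linarith
    calc ∑ j ∈ Finset.range n, (1 / ((N:ℝ) - j - 1)) ^ 2 + (1 / ((N:ℝ) - n - 1)) ^ 2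
        ≤ (N:ℝ) / m ^ 2 + (1/(m-1))^2 := by
          rw [← hnewterm]
          exact add_le_add_left ihn _
      _ ≤ (N:ℝ) / (m - 1) ^ 2 := key
      _ = (N:ℝ) / ((N:ℝ) - ↑n - 1) ^ 2 := by rw [hmdef]
      _ = (N:ℝ) / ((N:ℝ) - (↑n + 1)) ^ 2 := by ring_nf

lemma mgf_bound (N : ℕ) (x : Fin N → ℝ) (hmean : ∑ i, x i = 0) (a b : ℝ)
    (ha : ∀ i, a ≤ x i) (hb : ∀ i, x i ≤ b) (lam : ℝ) :
    ∀ k, k < N → ∑ σ : Equiv.Perm (Fin N), exp (lam / ((N:ℝ) - k) * SS N x k σ)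
      ≤ (Nat.factorial N : ℝ) *
        exp (lam^2 * (b-a)^2 / 8 * ∑ j ∈ Finset.range k, (1/((N:ℝ)-j-1))^2) := by
  intro k
  induction k with
  | zero =>
    intro _
    have h0 : ∀ σ : Equiv.Perm (Fin N), SS N x 0 σ = 0 := by
      intro σ; unfold SS
      rw [Finset.filter_false_of_mem (fun i _ => by omega), Finset.sum_empty]
    simp only [h0]
    simp [Fintype.card_perm, Fintype.card_fin]
  | succ k ih =>
    intro hk1
    have hk : k < N := Nat.lt_of_succ_lt hk1
    have ihk := ih hk
    have hNk : (0:ℝ) < (N:ℝ) - k := by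
      have : (k:ℝ) < N := by exact_mod_cast hk
      linarith
    have hNk1 : (0:ℝ) < (N:ℝ) - k - 1 := by
      have : ((k+1:ℕ):ℝ) < N := by exact_mod_cast hk1
      push_cast at this
      linarith
    set t' : ℝ := lam / ((N:ℝ) - k - 1) with ht'
    have hcastk1 : (N:ℝ) - ((k+1:ℕ):ℝ) = (N:ℝ) - k - 1 := by push_cast; ring
    have hcastNk : ((N - k : ℕ) : ℝ) = (N:ℝ) - k := by
      rw [Nat.cast_sub hk.le]
    set J := Finset.univ.filter (fun j : Fin N => k ≤ (j : ℕ)) with hJ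
    have hJne : J.Nonempty := ⟨⟨k, hk⟩, by simp [hJ]⟩
    have step : ((N:ℝ) - k) * ∑ σ : Equiv.Perm (Fin N), exp (t' * SS N x (k+1) σ)
        ≤ ((N:ℝ) - k) * (exp (t'^2 * (b-a)^2 / 8) *
            ∑ σ : Equiv.Perm (Fin N), exp (lam / ((N:ℝ) - k) * SS N x k σ)) := by
      rw [← hcastNk, swap_step N x k hk t', hcastNk]
      calc ∑ σ : Equiv.Perm (Fin N), exp (t' * SS N x k σ) * ∑ j ∈ J, exp (t' * x (σ j))
          ≤ ∑ σ : Equiv.Perm (Fin N), exp (t' * SS N x k σ) *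
              (((N:ℝ) - k) * exp (t' * (- SS N x k σ / ((N:ℝ) - k)) + t'^2 * (b-a)^2/8)) := by
            apply Finset.sum_le_sum
            intro σ _
            apply mul_le_mul_of_nonneg_left _ (exp_pos _).le
            have hh := finset_hoeffding J hJne (fun j => x (σ j)) a b
              (fun j _ => ha (σ j)) (fun j _ => hb (σ j)) t'
            rw [hJ] at hh ⊢
            rw [J_sum N k hk x hmean σ, J_card N k hk, hcastNk] at hh
            exact hh
        _ = ((N:ℝ) - k) * (exp (t'^2 * (b-a)^2 / 8) *
              ∑ σ : Equiv.Perm (Fin N), exp (lam / ((N:ℝ) - k) * SS N x k σ)) := by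
            rw [Finset.mul_sum, Finset.mul_sum]
            apply Finset.sum_congr rfl
            intro σ _
            have heq : t' * SS N x k σ + (t' * (- SS N x k σ / ((N:ℝ) - k)) + t'^2 * (b-a)^2/8)
                = t'^2 * (b-a)^2/8 + lam / ((N:ℝ) - k) * SS N x k σ := by
              rw [ht']
              field_simp
              ring
            rw [mul_left_comm, ← exp_add, heq, exp_add]
    have step2 : ∑ σ : Equiv.Perm (Fin N), exp (t' * SS N x (k+1) σ)
        ≤ exp (t'^2 * (b-a)^2 / 8) *
            ∑ σ : Equiv.Perm (Fin N), exp (lam / ((N:ℝ) - k) * SS N x k σ) :=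
      le_of_mul_le_mul_left step hNk
    rw [hcastk1]
    calc ∑ σ : Equiv.Perm (Fin N), exp (t' * SS N x (k+1) σ)
        ≤ exp (t'^2 * (b-a)^2 / 8) *
            ∑ σ : Equiv.Perm (Fin N), exp (lam / ((N:ℝ) - k) * SS N x k σ) := step2
      _ ≤ exp (t'^2 * (b-a)^2 / 8) * ((Nat.factorial N : ℝ) *
            exp (lam^2 * (b-a)^2 / 8 * ∑ j ∈ Finset.range k, (1/((N:ℝ)-j-1))^2)) :=
          mul_le_mul_of_nonneg_left ihk (exp_pos _).le
      _ = (Nat.factorial N : ℝ) *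
            exp (lam^2 * (b-a)^2 / 8 * ∑ j ∈ Finset.range (k+1), (1/((N:ℝ)-j-1))^2) := by
          rw [Finset.sum_range_succ, ← mul_assoc, mul_comm (exp _) ((Nat.factorial N : ℝ)),
            mul_assoc, ← exp_add]
          congr 2
          rw [ht']
          field_simp
          ring

lemma one_sided (N n : ℕ) (hnN : n < N) (x : Fin N → ℝ) (hmean : ∑ i, x i = 0)
    (a b : ℝ) (ha : ∀ i, a ≤ x i) (hb : ∀ i, x i ≤ b) (hab : a < b)
    (ε : ℝ) (hε : 0 < ε) :
    ((Finset.univ.filter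
        (fun σ : Equiv.Perm (Fin N) => (N:ℝ) * ε ≤ SS N x n σ)).card : ℝ)
      ≤ (Nat.factorial N : ℝ) * exp (-2 * N * ε ^ 2 / (b - a) ^ 2) := by
  set D : ℝ := (b - a) ^ 2 with hD
  have hDpos : 0 < D := by
    have h : 0 < b - a := by linarith
    rw [hD]; positivity
  set m : ℝ := (N:ℝ) - n with hm
  have hmpos : (0:ℝ) < m := by
    rw [hm]
    have : (n:ℝ) < N := by exact_mod_cast hnN
    linarith
  set lam : ℝ := 4 * ε * m / D with hlam
  have hlampos : 0 < lam := by rw [hlam]; positivity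
  set t : ℝ := lam / m with ht
  have htpos : 0 < t := div_pos hlampos hmpos
  set F := Finset.univ.filter (fun σ : Equiv.Perm (Fin N) => (N:ℝ) * ε ≤ SS N x n σ) with hF
  have markov : (F.card : ℝ) * exp (t * ((N:ℝ) * ε))
      ≤ ∑ σ : Equiv.Perm (Fin N), exp (lam / ((N:ℝ) - n) * SS N x n σ) := by
    rw [← hm, ← ht]
    calc (F.card : ℝ) * exp (t * ((N:ℝ) * ε)) = ∑ _σ ∈ F, exp (t * ((N:ℝ) * ε)) := by
          rw [Finset.sum_const, nsmul_eq_mul]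
      _ ≤ ∑ σ ∈ F, exp (t * SS N x n σ) := by
          apply Finset.sum_le_sum
          intro σ hσ
          have hev : (N:ℝ) * ε ≤ SS N x n σ := by
            rw [hF] at hσ
            exact (Finset.mem_filter.1 hσ).2
          exact exp_le_exp.2 (mul_le_mul_of_nonneg_left hev htpos.le)
      _ ≤ ∑ σ : Equiv.Perm (Fin N), exp (t * SS N x n σ) :=
          Finset.sum_le_sum_of_subset_of_nonneg (Finset.filter_subset _ _)
            (fun σ _ _ => (exp_pos _).le)
  have hmgf := mgf_bound N x hmean a b ha hb lam n hnN
  have hBs := Bsum_le N n hnN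
  have hmono : (Nat.factorial N : ℝ) *
        exp (lam^2 * (b-a)^2 / 8 * ∑ j ∈ Finset.range n, (1/((N:ℝ)-j-1))^2)
      ≤ (Nat.factorial N : ℝ) * exp (lam^2 * D / 8 * ((N:ℝ) / m^2)) := by
    apply mul_le_mul_of_nonneg_left _ (Nat.cast_nonneg _)
    rw [exp_le_exp, ← hD]
    apply mul_le_mul_of_nonneg_left _ (by positivity)
    rw [hm]
    exact hBs
  have chain : (F.card : ℝ) * exp (t * ((N:ℝ) * ε))
      ≤ (Nat.factorial N : ℝ) * exp (lam^2 * D / 8 * ((N:ℝ) / m^2)) :=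
    le_trans markov (le_trans hmgf hmono)
  have hdiv : (F.card : ℝ)
      ≤ (Nat.factorial N : ℝ) * exp (lam^2 * D / 8 * ((N:ℝ) / m^2)) / exp (t * ((N:ℝ) * ε)) :=
    (le_div_iff₀ (exp_pos _)).2 chain
  rw [mul_div_assoc, ← Real.exp_sub] at hdiv
  have hexp : lam^2 * D / 8 * ((N:ℝ) / m^2) - t * ((N:ℝ) * ε) = -2 * N * ε ^ 2 / D := by
    rw [hlam, ht, hlam]
    field_simp
    ring
  rw [hexp] at hdiv
  exact hdiv

/-- Serfling's corollary for sampling without replacement: if `x₁,…,x_N` has mean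
zero, `a = min xᵢ`, `b = max xᵢ`, and `X₁,…,X_n` are sampled from the list without
replacement (modeled by a uniformly random permutation `σ`, `Sₙ = ∑_{i<n} x (σ i)`),
then `P(|Sₙ/N| ≥ ε) ≤ 2 exp(-2Nε²/(b-a)²)`, the probability being the uniform
measure on permutations. -/
theorem serfling_corollary (N n : ℕ) (hN : 0 < N) (hn : n ≤ N)
    (x : Fin N → ℝ) (hmean : ∑ i, x i = 0) (a b : ℝ)
    (ha : ∀ i, a ≤ x i) (hb : ∀ i, x i ≤ b) (ε : ℝ) (hε : 0 < ε) :
    (Nat.card {σ : Equiv.Perm (Fin N) //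
        ε ≤ |(∑ i ∈ Finset.univ.filter (fun i : Fin N => (i : ℕ) < n), x (σ i)) / N|} : ℝ)
      / (Nat.card (Equiv.Perm (Fin N)))
      ≤ 2 * Real.exp (-2 * N * ε ^ 2 / (b - a) ^ 2) := by
  have hNreal : (0:ℝ) < N := by exact_mod_cast hN
  have hcardperm : (Nat.card (Equiv.Perm (Fin N)) : ℝ) = (Nat.factorial N : ℝ) := by
    rw [Nat.card_eq_fintype_card, Fintype.card_perm, Fintype.card_fin]
  have hfact : (0:ℝ) < (Nat.factorial N : ℝ) := by
    exact_mod_cast Nat.factorial_pos N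
  have hsub : Nat.card {σ : Equiv.Perm (Fin N) //
      ε ≤ |(∑ i ∈ Finset.univ.filter (fun i : Fin N => (i : ℕ) < n), x (σ i)) / N|}
      = (Finset.univ.filter (fun σ : Equiv.Perm (Fin N) =>
          ε ≤ |SS N x n σ / N|)).card := by
    rw [Nat.card_eq_fintype_card, Fintype.card_subtype]
    rfl
  rw [hsub, hcardperm]
  by_cases hdeg : n = 0 ∨ N ≤ n ∨ b ≤ a
  · have hzero : ∀ σ : Equiv.Perm (Fin N), SS N x n σ = 0 := by
      intro σ
      rcases hdeg with h | h | h
      · unfold SS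
        subst h
        rw [Finset.filter_false_of_mem (fun i _ => by omega), Finset.sum_empty]
      · unfold SS
        rw [Finset.filter_true_of_mem (fun i _ => lt_of_lt_of_le i.isLt h)]
        rw [Equiv.sum_comp σ x]
        exact hmean
      · have hxa : ∀ i, x i = a := fun i => le_antisymm ((hb i).trans h) (ha i)
        have hsum : ∑ i, x i = (N:ℝ) * a := by
          rw [Finset.sum_congr rfl (fun i _ => hxa i), Finset.sum_const, nsmul_eq_mul,
            Finset.card_univ, Fintype.card_fin]
        have ha0 : a = 0 := by
          rw [hmean] at hsum
          have := hsum.symm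
          rcases mul_eq_zero.1 this with h' | h'
          · exact absurd h' (by positivity)
          · exact h'
        unfold SS
        rw [Finset.sum_congr rfl (fun i _ => by rw [hxa (σ i), ha0]), Finset.sum_const,
          smul_zero]
    have hempty : Finset.univ.filter (fun σ : Equiv.Perm (Fin N) =>
        ε ≤ |SS N x n σ / N|) = ∅ := by
      apply Finset.filter_false_of_mem
      intro σ _
      rw [hzero σ]
      simp
      linarith
    rw [hempty]
    simp only [Finset.card_empty, Nat.cast_zero, zero_div]
    positivity
  · push_neg at hdeg
    obtain ⟨hn0, hnN', hab⟩ := hdeg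
    have hnN : n < N := hnN'
    set F := Finset.univ.filter (fun σ : Equiv.Perm (Fin N) => ε ≤ |SS N x n σ / N|) with hF
    set F1 := Finset.univ.filter
      (fun σ : Equiv.Perm (Fin N) => (N:ℝ) * ε ≤ SS N x n σ) with hF1
    set F2 := Finset.univ.filter
      (fun σ : Equiv.Perm (Fin N) => (N:ℝ) * ε ≤ SS N (fun i => - x i) n σ) with hF2
    have hSSneg : ∀ σ : Equiv.Perm (Fin N), SS N (fun i => - x i) n σ = - SS N x n σ := by
      intro σ
      unfold SS
      rw [← Finset.sum_neg_distrib]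
    have hsubset : F ⊆ F1 ∪ F2 := by
      intro σ hσ
      have hev : ε ≤ |SS N x n σ / N| := (Finset.mem_filter.1 hσ).2
      rw [abs_div, abs_of_pos hNreal, le_div_iff₀ hNreal] at hev
      rw [Finset.mem_union, hF1, hF2, Finset.mem_filter, Finset.mem_filter]
      rcases abs_cases (SS N x n σ) with ⟨habs, _⟩ | ⟨habs, _⟩
      · left
        refine ⟨Finset.mem_univ _, ?_⟩
        rw [habs] at hev
        linarith
      · right
        refine ⟨Finset.mem_univ _, ?_⟩
        rw [hSSneg σ]
        rw [habs] at hev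
        linarith
    have hc1 : ((F1.card : ℕ) : ℝ)
        ≤ (Nat.factorial N : ℝ) * exp (-2 * N * ε ^ 2 / (b - a) ^ 2) :=
      one_sided N n hnN x hmean a b ha hb hab ε hε
    have hmean2 : ∑ i, (fun i => - x i) i = 0 := by
      simp only
      rw [Finset.sum_neg_distrib, hmean, neg_zero]
    have hc2 : ((F2.card : ℕ) : ℝ)
        ≤ (Nat.factorial N : ℝ) * exp (-2 * N * ε ^ 2 / (b - a) ^ 2) := by
      have h := one_sided N n hnN (fun i => - x i) hmean2 (-b) (-a)
        (fun i => neg_le_neg (hb i)) (fun i => neg_le_neg (ha i)) (by linarith) ε hε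
      have hsq : (-a - -b) ^ 2 = (b - a) ^ 2 := by ring
      rw [hsq] at h
      exact h
    have hcard : (F.card : ℝ) ≤ 2 * ((Nat.factorial N : ℝ) *
        exp (-2 * N * ε ^ 2 / (b - a) ^ 2)) := by
      have h1 : F.card ≤ F1.card + F2.card :=
        le_trans (Finset.card_le_card hsubset) (Finset.card_union_le _ _)
      have h2 : (F.card : ℝ) ≤ (F1.card : ℝ) + (F2.card : ℝ) := by exact_mod_cast h1
      linarith
    rw [div_le_iff₀ hfact]
    calc (F.card : ℝ) ≤ 2 * ((Nat.factorial N : ℝ) *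
          exp (-2 * N * ε ^ 2 / (b - a) ^ 2)) := hcard
      _ = 2 * exp (-2 * N * ε ^ 2 / (b - a) ^ 2) * (Nat.factorial N : ℝ) := by ring
end
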